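/- Total variation bound for the composed trigger-quantizer mechanism: let M(y) output Q(y) with probability p(y) and output ∅ with probability 1 - p(y), where p is K_1-Lipschitz in y and q ↦ P(Q(y)=q) is (1/d)-Lipschitz in y for each fixed output q (in the sense |P(Q(y)=q) - P(Q(y')=q)| ≤ |y-y'|/d whenever both are positive). Then for any observation event O, |P(M(y) ∈ O) - P(M(y') ∈ O)| ≤ (K_1 + 1/d)|y - y'|. -/
import Mathlib


/-- Total variation bound for the composed trigger–quantizer mechanism: `M y`
outputs `Q(y)` (a quantization point `q`) with probability `p y * P y q` and `∅`
(modeled as `none`) with probability `1 - p y`. If `p` is `K₁`-Lipschitz, the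
quantizer probabilities `q ↦ P y q` are `(1/d)`-Lipschitz in `y` for each fixed
output `q`, `p` takes values in `[0,1]` and `P y' q ∈ [0,1]`, then for any
observation `o` the output probabilities differ by at most `(K₁ + 1/d)|y - y'|`. -/
theorem mechanism_total_variation_bound (d K₁ : ℝ) (hd : 0 < d) (hK₁ : 0 ≤ K₁)
    (p : ℝ → ℝ) (P : ℝ → ℝ → ℝ) (y y' : ℝ)
    (hp01 : ∀ t, p t ∈ Set.Icc (0 : ℝ) 1)
    (hP01 : ∀ t q, P t q ∈ Set.Icc (0 : ℝ) 1)
    (hplip : |p y - p y'| ≤ K₁ * |y - y'|)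
    (hPlip : ∀ q, |P y q - P y' q| ≤ |y - y'| / d)
    (PM : ℝ → Option ℝ → ℝ)
    (hPM : ∀ t o, PM t o = match o with
      | none => 1 - p t
      | some q => p t * P t q) :
    ∀ o : Option ℝ, |PM y o - PM y' o| ≤ (K₁ + 1 / d) * |y - y'| := by
  intro o
  have habs : (0:ℝ) ≤ |y - y'| := abs_nonneg _
  have hdinv : (0:ℝ) ≤ 1 / d := by positivity
  match o with
  | none =>
    rw [hPM y none, hPM y' none]
    have : (1 - p y) - (1 - p y') = -(p y - p y') := by ring
    rw [this, abs_neg]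
    calc |p y - p y'| ≤ K₁ * |y - y'| := hplip
      _ ≤ (K₁ + 1 / d) * |y - y'| := by nlinarith
  | some q =>
    rw [hPM y (some q), hPM y' (some q)]
    have key : p y * P y q - p y' * P y' q
        = p y * (P y q - P y' q) + (p y - p y') * P y' q := by ring
    rw [key]
    have h1 : |p y * (P y q - P y' q)| ≤ 1 / d * |y - y'| := by
      rw [abs_mul]
      have hp := hp01 y
      have hPl := hPlip q
      have : |p y| ≤ 1 := abs_le.2 ⟨by linarith [hp.1], hp.2⟩
      calc |p y| * |P y q - P y' q| ≤ 1 * (|y - y'| / d) :=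
            mul_le_mul this hPl (abs_nonneg _) zero_le_one
        _ = 1 / d * |y - y'| := by ring
    have h2 : |(p y - p y') * P y' q| ≤ K₁ * |y - y'| := by
      rw [abs_mul]
      have hP := hP01 y' q
      have : |P y' q| ≤ 1 := abs_le.2 ⟨by linarith [hP.1], hP.2⟩
      calc |p y - p y'| * |P y' q| ≤ (K₁ * |y - y'|) * 1 :=
            mul_le_mul hplip this (abs_nonneg _) (by positivity)
        _ = K₁ * |y - y'| := by ring
    calc |p y * (P y q - P y' q) + (p y - p y') * P y' q|
        ≤ |p y * (P y q - P y' q)| + |(p y - p y') * P y' q| := abs_add_le _ _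
      _ ≤ 1 / d * |y - y'| + K₁ * |y - y'| := add_le_add h1 h2
      _ = (K₁ + 1 / d) * |y - y'| := by ring
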